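/- Let s, r be positive integers with s dividing r, and let (a_{ij})_{1≤i,j≤r} be real numbers of the form a_{ij} = f(|i-j|) for some function f : {0,...,r-1} → ℝ (a symmetric Toeplitz array). Define γ(k) = 1 - 1/s if k mod s = 0 and γ(k) = -1/s otherwise. Then ∑_{i=1}^r ∑_{j=1}^r γ(|i-j|) a_{ij} ≥ 0 whenever the array (a_{ij}) is a covariance-type array, i.e., a_{ij} = E[Y_i Y_j] for some square-integrable random variables Y_1,...,Y_r. Equivalently, ∑_{k=-r+1}^{r-1} (1 - |k|/r) γ(|k|) f(|k|) ≥ 0 for f(|k|) = E[Y_0 Y_k] with (Y_k) stationary. -/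

import Mathlib

open MeasureTheory

/-- nonnegativity of the γ-weighted sum of a stationary covariance array. -/
theorem stmt1 {Ω : Type*} [MeasurableSpace Ω] (μ : Measure Ω) [IsProbabilityMeasure μ]
    (s r : ℕ) (hs : 0 < s) (hr : 0 < r) (hdvd : s ∣ r)
    (Y : ℕ → Ω → ℝ) (hmeas : ∀ i, Measurable (Y i))
    (hint : ∀ i j, Integrable (fun ω => Y i ω * Y j ω) μ)
    (f : ℕ → ℝ)
    (htoeplitz : ∀ i j, 1 ≤ i → i ≤ r → 1 ≤ j → j ≤ r →
      ∫ ω, Y i ω * Y j ω ∂μ = f ((i : ℤ) - (j : ℤ)).natAbs) :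
    0 ≤ ∑ i ∈ Finset.Icc 1 r, ∑ j ∈ Finset.Icc 1 r,
      (if ((i : ℤ) - (j : ℤ)).natAbs % s = 0 then 1 - 1 / (s : ℝ) else -(1 / (s : ℝ))) *
        f ((i : ℤ) - (j : ℤ)).natAbs := by
  classical
  have hs0 : (s : ℝ) ≠ 0 := Nat.cast_ne_zero.2 hs.ne'
  set g : ℕ → ℕ → ℝ := fun i u => (if i % s = u then (s : ℝ) else 0) - 1 with hg
  have hmod : ∀ i j : ℕ, (((i : ℤ) - (j : ℤ)).natAbs % s = 0) ↔ (i % s = j % s) := by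
    intro i j
    rw [← Nat.dvd_iff_mod_eq_zero, ← Int.natCast_dvd_natCast, Int.dvd_natAbs,
      ← Int.modEq_iff_dvd]
    unfold Int.ModEq
    rw [← Int.natCast_mod, ← Int.natCast_mod, Nat.cast_inj, eq_comm]
  have hgsum : ∀ i j : ℕ, ∑ u ∈ Finset.range s, g i u * g j u
      = (if i % s = j % s then (s : ℝ)^2 else 0) - s := by
    intro i j
    have hiu : i % s ∈ Finset.range s := Finset.mem_range.2 (Nat.mod_lt _ hs)
    have hju : j % s ∈ Finset.range s := Finset.mem_range.2 (Nat.mod_lt _ hs)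
    have expand : ∀ u ∈ Finset.range s, g i u * g j u =
        (if i % s = u then (if i % s = j % s then (s:ℝ)^2 else 0) else 0)
        - (if i % s = u then (s:ℝ) else 0) - (if j % s = u then (s:ℝ) else 0) + 1 := by
      intro u _
      simp only [hg]
      rcases eq_or_ne (i % s) u with h1 | h1
      · rcases eq_or_ne (j % s) u with h2 | h2
        · simp [h1, h2, h1.trans h2.symm]; ring
        · have hne : i % s ≠ j % s := fun h => h2 (h ▸ h1)
          simp [h1, h2, hne, Ne.symm h2]; ring
      · simp [h1]; ring
    rw [Finset.sum_congr rfl expand]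
    simp only [Finset.sum_add_distrib, Finset.sum_sub_distrib,
      Finset.sum_ite_eq, hiu, hju, if_true, Finset.sum_const, Finset.card_range,
      nsmul_eq_mul, mul_one]
    ring
  have hγ : ∀ i j : ℕ,
      (if ((i : ℤ) - (j : ℤ)).natAbs % s = 0 then 1 - 1 / (s : ℝ) else -(1 / (s : ℝ)))
        = (1 / (s : ℝ)^2) * ∑ u ∈ Finset.range s, g i u * g j u := by
    intro i j
    rw [hgsum i j]
    by_cases h : i % s = j % s
    · rw [if_pos ((hmod i j).2 h), if_pos h]
      field_simp
    · rw [if_neg (fun hh => h ((hmod i j).1 hh)), if_neg h]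
      field_simp
      ring
  have key : ∀ u : ℕ, 0 ≤ ∑ i ∈ Finset.Icc 1 r, ∑ j ∈ Finset.Icc 1 r,
      g i u * g j u * ∫ ω, Y i ω * Y j ω ∂μ := by
    intro u
    have hInt : ∀ i j : ℕ, Integrable (fun ω => g i u * Y i ω * (g j u * Y j ω)) μ := by
      intro i j
      have := (hint i j).const_mul (g i u * g j u)
      refine this.congr (Filter.Eventually.of_forall fun ω => ?_)
      ring
    have heq : ∑ i ∈ Finset.Icc 1 r, ∑ j ∈ Finset.Icc 1 r,
        g i u * g j u * ∫ ω, Y i ω * Y j ω ∂μ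
        = ∫ ω, (∑ i ∈ Finset.Icc 1 r, g i u * Y i ω)^2 ∂μ := by
      have hsq : ∀ ω, (∑ i ∈ Finset.Icc 1 r, g i u * Y i ω)^2
          = ∑ i ∈ Finset.Icc 1 r, ∑ j ∈ Finset.Icc 1 r,
              g i u * Y i ω * (g j u * Y j ω) := by
        intro ω
        rw [sq, Finset.sum_mul_sum]
      rw [integral_congr_ae (Filter.Eventually.of_forall fun ω => hsq ω)]
      rw [integral_finset_sum _ (fun i _ => integrable_finset_sum _ (fun j _ => hInt i j))]
      refine Finset.sum_congr rfl fun i _ => ?_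
      rw [integral_finset_sum _ (fun j _ => hInt i j)]
      refine Finset.sum_congr rfl fun j _ => ?_
      rw [show (fun ω => g i u * Y i ω * (g j u * Y j ω))
          = (fun ω => g i u * g j u * (Y i ω * Y j ω)) from funext fun ω => by ring,
        integral_const_mul]
    rw [heq]
    exact integral_nonneg fun ω => sq_nonneg _
  have hrw : ∑ i ∈ Finset.Icc 1 r, ∑ j ∈ Finset.Icc 1 r,
      (if ((i : ℤ) - (j : ℤ)).natAbs % s = 0 then 1 - 1 / (s : ℝ) else -(1 / (s : ℝ))) *
        f ((i : ℤ) - (j : ℤ)).natAbs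
      = ∑ i ∈ Finset.Icc 1 r, ∑ j ∈ Finset.Icc 1 r,
          (1 / (s : ℝ)^2) * ∑ u ∈ Finset.range s,
            g i u * g j u * ∫ ω, Y i ω * Y j ω ∂μ := by
    refine Finset.sum_congr rfl fun i hi => Finset.sum_congr rfl fun j hj => ?_
    rw [Finset.mem_Icc] at hi hj
    rw [← htoeplitz i j hi.1 hi.2 hj.1 hj.2, hγ i j, mul_assoc, Finset.sum_mul]
  have hswap : ∑ i ∈ Finset.Icc 1 r, ∑ j ∈ Finset.Icc 1 r,
      (1 / (s : ℝ)^2) * ∑ u ∈ Finset.range s,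
        g i u * g j u * ∫ ω, Y i ω * Y j ω ∂μ
      = (1 / (s : ℝ)^2) * ∑ u ∈ Finset.range s, ∑ i ∈ Finset.Icc 1 r,
          ∑ j ∈ Finset.Icc 1 r, g i u * g j u * ∫ ω, Y i ω * Y j ω ∂μ := by
    simp only [← Finset.mul_sum]
    congr 1
    calc ∑ i ∈ Finset.Icc 1 r, ∑ j ∈ Finset.Icc 1 r, ∑ u ∈ Finset.range s,
          g i u * g j u * ∫ ω, Y i ω * Y j ω ∂μ
        = ∑ i ∈ Finset.Icc 1 r, ∑ u ∈ Finset.range s, ∑ j ∈ Finset.Icc 1 r,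
          g i u * g j u * ∫ ω, Y i ω * Y j ω ∂μ :=
          Finset.sum_congr rfl fun i _ => Finset.sum_comm
      _ = ∑ u ∈ Finset.range s, ∑ i ∈ Finset.Icc 1 r, ∑ j ∈ Finset.Icc 1 r,
          g i u * g j u * ∫ ω, Y i ω * Y j ω ∂μ := Finset.sum_comm
  rw [hrw, hswap]
  exact mul_nonneg (by positivity) (Finset.sum_nonneg fun u _ => key u)
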